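/- If w is an Eisenstein integer not divisible by β = ω - ω², then w³ ≡ 1 or w³ ≡ -1 (mod 9) in ℤ[ω]. -/
import Mathlib

lemma zmod_key : ∀ x y : ZMod 9,
    (ZMod.castHom (by norm_num : (3:ℕ) ∣ 9) (ZMod 3)) (x + y) ≠ 0 →
    (x^3 + y^3 - 3*x*y^2 - 1 = 0 ∧ 3*x^2*y - 3*x*y^2 = 0) ∨
    (x^3 + y^3 - 3*x*y^2 + 1 = 0 ∧ 3*x^2*y - 3*x*y^2 = 0) := by decide

lemma int_key (a b : ℤ) (h : ¬ (3:ℤ) ∣ a + b) :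
    ((9:ℤ) ∣ a^3 + b^3 - 3*a*b^2 - 1 ∧ (9:ℤ) ∣ 3*a^2*b - 3*a*b^2) ∨
    ((9:ℤ) ∣ a^3 + b^3 - 3*a*b^2 + 1 ∧ (9:ℤ) ∣ 3*a^2*b - 3*a*b^2) := by
  have h3 : (ZMod.castHom (by norm_num : (3:ℕ) ∣ 9) (ZMod 3)) ((a : ZMod 9) + b) ≠ 0 := by
    have : ((a : ZMod 9) + b) = ((a + b : ℤ) : ZMod 9) := by push_cast; ring
    rw [this, map_intCast]
    rw [Ne, ZMod.intCast_zmod_eq_zero_iff_dvd]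
    exact_mod_cast h
  have := zmod_key a b h3
  rcases this with ⟨h1, h2⟩ | ⟨h1, h2⟩
  · left
    constructor
    · rw [show (9:ℤ) = ((9:ℕ):ℤ) by norm_num, ← ZMod.intCast_zmod_eq_zero_iff_dvd]; push_cast; linear_combination h1
    · rw [show (9:ℤ) = ((9:ℕ):ℤ) by norm_num, ← ZMod.intCast_zmod_eq_zero_iff_dvd]; push_cast; linear_combination h2
  · right
    constructor
    · rw [show (9:ℤ) = ((9:ℕ):ℤ) by norm_num, ← ZMod.intCast_zmod_eq_zero_iff_dvd]; push_cast; linear_combination h1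
    · rw [show (9:ℤ) = ((9:ℕ):ℤ) by norm_num, ← ZMod.intCast_zmod_eq_zero_iff_dvd]; push_cast; linear_combination h2

theorem eisenstein_cube_mod_nine (ω : ℂ) (hω : ω ^ 3 = 1) (hω1 : ω ≠ 1)
    (β w : Subring.closure ({ω} : Set ℂ)) (hβ : (β : ℂ) = ω - ω ^ 2)
    (hw : ¬ β ∣ w) :
    (9 : Subring.closure ({ω} : Set ℂ)) ∣ w ^ 3 - 1 ∨
    (9 : Subring.closure ({ω} : Set ℂ)) ∣ w ^ 3 + 1 := by
  have hsum : ω ^ 2 + ω + 1 = 0 := by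
    have h := hω
    have h2 : (ω - 1) * (ω ^ 2 + ω + 1) = 0 := by linear_combination hω
    rcases mul_eq_zero.mp h2 with h3 | h3
    · exact (hω1 (by linear_combination h3)).elim
    · exact h3
  have omem : ω ∈ Subring.closure ({ω} : Set ℂ) := Subring.subset_closure rfl
  set o : Subring.closure ({ω} : Set ℂ) := ⟨ω, omem⟩ with ho
  have hoc : (o : ℂ) = ω := rfl
  have h9c : ((9 : Subring.closure ({ω} : Set ℂ)) : ℂ) = 9 := rfl
  have hβ2 : (β : ℂ) = 1 + 2 * ω := by linear_combination hβ - hsum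
  -- representation lemma
  have hrep : ∀ z : Subring.closure ({ω} : Set ℂ), ∃ a b : ℤ, (z : ℂ) = a + b * ω := by
    rintro ⟨z, hz⟩
    refine Subring.closure_induction (p := fun x _ => ∃ a b : ℤ, x = a + b * ω)
      ?_ ?_ ?_ ?_ ?_ ?_ hz
    · rintro x rfl; exact ⟨0, 1, by push_cast; ring⟩
    · exact ⟨0, 0, by push_cast; ring⟩
    · exact ⟨1, 0, by push_cast; ring⟩
    · rintro x y hx hy ⟨a, b, rfl⟩ ⟨c, d, rfl⟩
      exact ⟨a + c, b + d, by push_cast; ring⟩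
    · rintro x hx ⟨a, b, rfl⟩
      exact ⟨-a, -b, by push_cast; ring⟩
    · rintro x y hx hy ⟨a, b, rfl⟩ ⟨c, d, rfl⟩
      exact ⟨a * c - b * d, a * d + b * c - b * d, by push_cast; linear_combination (b*d:ℂ)*hsum⟩
  obtain ⟨a, b, hwc⟩ := hrep w
  -- not divisible by 3
  have h3 : ¬ (3 : ℤ) ∣ a + b := by
    rintro ⟨k, hk⟩
    apply hw
    refine ⟨((b - k : ℤ) : Subring.closure ({ω} : Set ℂ)) + ((k - a : ℤ) : Subring.closure ({ω} : Set ℂ)) * o, ?_⟩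
    apply Subtype.ext
    push_cast [hoc, h9c]
    rw [hwc]
    have hkc : (a : ℂ) + b = 3 * k := by exact_mod_cast congrArg (Int.cast : ℤ → ℂ) hk
    rw [hβ2]
    linear_combination 2*((a:ℂ)-k)*hsum - (ω+1)*hkc
  rcases int_key a b h3 with ⟨⟨u, hu⟩, ⟨v, hv⟩⟩ | ⟨⟨u, hu⟩, ⟨v, hv⟩⟩
  · left
    refine ⟨((u : ℤ) : Subring.closure ({ω} : Set ℂ)) + ((v : ℤ) : Subring.closure ({ω} : Set ℂ)) * o, ?_⟩
    apply Subtype.ext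
    push_cast [hoc, h9c]
    rw [hwc]
    have huc : (a:ℂ)^3 + b^3 - 3*a*b^2 - 1 = 9*u := by exact_mod_cast congrArg (Int.cast : ℤ → ℂ) hu
    have hvc : 3*(a:ℂ)^2*b - 3*a*b^2 = 9*v := by exact_mod_cast congrArg (Int.cast : ℤ → ℂ) hv
    linear_combination huc + ω*hvc + 3*(a:ℂ)*(b:ℂ)^2*hsum + (b:ℂ)^3*hω
  · right
    refine ⟨((u : ℤ) : Subring.closure ({ω} : Set ℂ)) + ((v : ℤ) : Subring.closure ({ω} : Set ℂ)) * o, ?_⟩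
    apply Subtype.ext
    push_cast [hoc, h9c]
    rw [hwc]
    have huc : (a:ℂ)^3 + b^3 - 3*a*b^2 + 1 = 9*u := by exact_mod_cast congrArg (Int.cast : ℤ → ℂ) hu
    have hvc : 3*(a:ℂ)^2*b - 3*a*b^2 = 9*v := by exact_mod_cast congrArg (Int.cast : ℤ → ℂ) hv
    linear_combination huc + ω*hvc + 3*(a:ℂ)*(b:ℂ)^2*hsum + (b:ℂ)^3*hω
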